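/- The cusp triangle T' and the triangle T'' of the centers of the osculating circles are homothetic with center M and ratio 2: for each i = 1,2,3, P_i'' = (M + P_i')/2, i.e. P_i' − M = 2(P_i'' − M). Consequently, with P_i'' = (x_i'', y_i''), the area of T'' equals one quarter of the area of T': (1/2)·|x₁''(y₂'' − y₃'') + x₂''(y₃'' − y₁'') + x₃''(y₁'' − y₂'')| = 27√3·c⁴/(64ab) for every u. -/

import Mathlib

open Real

noncomputable def ellipsePt (a b t : ℝ) : ℝ × ℝ := (a * cos t, b * sin t)

noncomputable def steinerHat (a b u t : ℝ) : ℝ × ℝ :=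
  (((a ^ 2 - b ^ 2) * (1 + cos (t + u)) * cos t - a ^ 2 * cos u) / a,
   ((a ^ 2 - b ^ 2) * cos t * sin (t + u) - (a ^ 2 - b ^ 2) * sin t - a ^ 2 * sin u) / b)

/-- Center of the circle osculating the ellipse at `P(t)` (a point of the evolute). -/
noncomputable def oscCenter (a b t : ℝ) : ℝ × ℝ :=
  ((a ^ 2 - b ^ 2) * (cos t) ^ 3 / a, -((a ^ 2 - b ^ 2) * (sin t) ^ 3 / b))

lemma trigA (t u : ℝ) (k : ℤ) (h : u = -(3*t) + k*(2*π)) :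
    cos (t+u) = 2*cos t^2 - 1 := by
  subst h
  rw [show t + (-(3*t) + (k:ℝ)*(2*π)) = -(2*t) + k*(2*π) by ring,
    Real.cos_add_int_mul_two_pi, cos_neg, cos_two_mul]

lemma trigB (t u : ℝ) (k : ℤ) (h : u = -(3*t) + k*(2*π)) :
    sin (t+u) = -(2*sin t*cos t) := by
  subst h
  rw [show t + (-(3*t) + (k:ℝ)*(2*π)) = -(2*t) + k*(2*π) by ring,
    Real.sin_add_int_mul_two_pi, sin_neg, sin_two_mul]

lemma trigC (t u : ℝ) (k : ℤ) (h : u = -(3*t) + k*(2*π)) :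
    cos u = 4*cos t^3 - 3*cos t := by
  subst h
  rw [Real.cos_add_int_mul_two_pi, cos_neg, cos_three_mul]

lemma trigD (t u : ℝ) (k : ℤ) (h : u = -(3*t) + k*(2*π)) :
    sin u = -(3*sin t - 4*sin t^3) := by
  subst h
  rw [Real.sin_add_int_mul_two_pi, sin_neg, sin_three_mul]

lemma homo (a b t u : ℝ) (ha : a ≠ 0) (hb : b ≠ 0)
    (h1 : cos (t+u) = 2*cos t^2 - 1) (h2 : sin (t+u) = -(2*sin t*cos t))
    (h3 : cos u = 4*cos t^3 - 3*cos t) (h4 : sin u = -(3*sin t - 4*sin t^3)) :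
    oscCenter a b t = (((ellipsePt a b u).1 + (steinerHat a b u t).1)/2,
      ((ellipsePt a b u).2 + (steinerHat a b u t).2)/2) := by
  have hsc : sin t^2 + cos t^2 = 1 := sin_sq_add_cos_sq t
  simp only [oscCenter, ellipsePt, steinerHat, h1, h2, h3, h4]
  rw [Prod.mk.injEq]
  constructor
  · field_simp
    ring
  · field_simp
    linear_combination (2*(a^2-b^2)*sin t) * hsc

lemma Fval (c s r : ℝ) (hs : s^2 + c^2 = 1) (hr : r^2 = 3) :
    c^3*((-s/2 + r/2*c)^3 - (-s/2 - r/2*c)^3)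
    + (-c/2 + r/2*s)^3*(s^3 - (-s/2 + r/2*c)^3)
    + (-c/2 - r/2*s)^3*((-s/2 - r/2*c)^3 - s^3) = 27*r/32 := by
  linear_combination ((9/32)*c^6*r + (9/16)*c^4*s^2*r + (9/16)*c^2*s^4*r + (9/32)*s^6*r
      + (3/32)*c^4*s^2*r^3 + (3/32)*c^2*s^4*r^3) * hr
    + ((27/32)*r*(c^4 + 2*c^2*s^2 + s^4 + c^2 + s^2 + 1)) * hs

lemma areaLem (a b t : ℝ) (hb : 0 < b) (hab : b < a) :
    (1/2) * |(oscCenter a b t).1 * ((oscCenter a b (t - 2*π/3)).2 - (oscCenter a b (t - 4*π/3)).2)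
      + (oscCenter a b (t - 2*π/3)).1 * ((oscCenter a b (t - 4*π/3)).2 - (oscCenter a b t).2)
      + (oscCenter a b (t - 4*π/3)).1 * ((oscCenter a b t).2 - (oscCenter a b (t - 2*π/3)).2)|
    = 27 * Real.sqrt 3 * (a ^ 2 - b ^ 2) ^ 2 / (64 * a * b) := by
  have ha : 0 < a := hb.trans hab
  have hc2 : cos (t - 2*π/3) = -(cos t)/2 + Real.sqrt 3/2 * sin t := by
    rw [cos_sub, show 2*π/3 = π - π/3 by ring, cos_pi_sub, sin_pi_sub,
      cos_pi_div_three, sin_pi_div_three]; ring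
  have hs2 : sin (t - 2*π/3) = -(sin t)/2 - Real.sqrt 3/2 * cos t := by
    rw [sin_sub, show 2*π/3 = π - π/3 by ring, cos_pi_sub, sin_pi_sub,
      cos_pi_div_three, sin_pi_div_three]; ring
  have hc4 : cos (t - 4*π/3) = -(cos t)/2 - Real.sqrt 3/2 * sin t := by
    rw [cos_sub, show 4*π/3 = π + π/3 by ring, cos_add, sin_add, cos_pi, sin_pi,
      cos_pi_div_three, sin_pi_div_three]; ring
  have hs4 : sin (t - 4*π/3) = -(sin t)/2 + Real.sqrt 3/2 * cos t := by
    rw [sin_sub, show 4*π/3 = π + π/3 by ring, cos_add, sin_add, cos_pi, sin_pi,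
      cos_pi_div_three, sin_pi_div_three]; ring
  have hr : Real.sqrt 3 ^ 2 = 3 := Real.sq_sqrt (by norm_num)
  have hsc : sin t^2 + cos t^2 = 1 := sin_sq_add_cos_sq t
  have hF := Fval (cos t) (sin t) (Real.sqrt 3) hsc hr
  have hX : (oscCenter a b t).1 * ((oscCenter a b (t - 2*π/3)).2 - (oscCenter a b (t - 4*π/3)).2)
      + (oscCenter a b (t - 2*π/3)).1 * ((oscCenter a b (t - 4*π/3)).2 - (oscCenter a b t).2)
      + (oscCenter a b (t - 4*π/3)).1 * ((oscCenter a b t).2 - (oscCenter a b (t - 2*π/3)).2)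
      = (a^2-b^2)^2/(a*b) * (27*Real.sqrt 3/32) := by
    simp only [oscCenter, hc2, hs2, hc4, hs4]
    rw [← hF]
    field_simp
    ring
  rw [hX]
  have hpos : (0:ℝ) < (a^2-b^2)^2/(a*b) * (27*Real.sqrt 3/32) := by
    have h1 : 0 < a^2 - b^2 := by nlinarith
    have h3 : 0 < Real.sqrt 3 := Real.sqrt_pos.mpr (by norm_num)
    positivity
  rw [abs_of_pos hpos]
  field_simp
  ring

/-- `T'` and `T''` are homothetic with center `M` and ratio 2:
`P_i'' = (M + P_i')/2`; consequently the area of `T''` is `27√3 c⁴/(64ab)`,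
one quarter that of `T'`. -/
theorem stmt14 (a b u : ℝ) (hb : 0 < b) (hab : b < a)
    (M P₁' P₂' P₃' P₁'' P₂'' P₃'' : ℝ × ℝ)
    (hM : M = ellipsePt a b u)
    (hP₁' : P₁' = steinerHat a b u (-u / 3))
    (hP₂' : P₂' = steinerHat a b u (-u / 3 - 2 * π / 3))
    (hP₃' : P₃' = steinerHat a b u (-u / 3 - 4 * π / 3))
    (hP₁'' : P₁'' = oscCenter a b (-u / 3))
    (hP₂'' : P₂'' = oscCenter a b (-u / 3 - 2 * π / 3))
    (hP₃'' : P₃'' = oscCenter a b (-u / 3 - 4 * π / 3)) :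
    P₁'' = ((M.1 + P₁'.1) / 2, (M.2 + P₁'.2) / 2) ∧
    P₂'' = ((M.1 + P₂'.1) / 2, (M.2 + P₂'.2) / 2) ∧
    P₃'' = ((M.1 + P₃'.1) / 2, (M.2 + P₃'.2) / 2) ∧
    (1 / 2) * |P₁''.1 * (P₂''.2 - P₃''.2) + P₂''.1 * (P₃''.2 - P₁''.2)
        + P₃''.1 * (P₁''.2 - P₂''.2)|
      = 27 * Real.sqrt 3 * (a ^ 2 - b ^ 2) ^ 2 / (64 * a * b) := by
  have ha : 0 < a := hb.trans hab
  have ha' : a ≠ 0 := ne_of_gt ha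
  have hb' : b ≠ 0 := ne_of_gt hb
  have k1 : u = -(3*(-u/3)) + (0:ℤ)*(2*π) := by push_cast; ring
  have k2 : u = -(3*(-u/3 - 2*π/3)) + (-1:ℤ)*(2*π) := by push_cast; ring
  have k3 : u = -(3*(-u/3 - 4*π/3)) + (-2:ℤ)*(2*π) := by push_cast; ring
  subst hM hP₁' hP₂' hP₃' hP₁'' hP₂'' hP₃''
  refine ⟨?_, ?_, ?_, ?_⟩
  · exact homo a b (-u/3) u ha' hb' (trigA _ _ _ k1) (trigB _ _ _ k1)
      (trigC _ _ _ k1) (trigD _ _ _ k1)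
  · exact homo a b (-u/3 - 2*π/3) u ha' hb' (trigA _ _ _ k2) (trigB _ _ _ k2)
      (trigC _ _ _ k2) (trigD _ _ _ k2)
  · exact homo a b (-u/3 - 4*π/3) u ha' hb' (trigA _ _ _ k3) (trigB _ _ _ k3)
      (trigC _ _ _ k3) (trigD _ _ _ k3)
  · exact areaLem a b (-u/3) hb hab
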